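/- Let M be a compact metric space and φ a continuous flow on M. The quotient Rec* of the chain-recurrent set Rec by the equivalence relation (x ⇝ y and y ⇝ x), equipped with the quotient topology, is compact and totally disconnected. -/

import Mathlib

/-- Combinatorial data of a pseudo-orbit: points `x i` and flow durations `t i`;
the pseudo-orbit follows the flow from `x i` for time `t i` and then jumps to `x (i+1)`. -/
structure PreChain (M : Type*) where
  n : ℕ
  x : Fin (n + 1) → M
  t : Fin (n + 1) → ℝ

namespace PreChain

variable {M : Type*} [MetricSpace M]

/-- `γ` is an `(ε,T)`-pseudo-orbit for the flow `φ`: each flow segment lasts at least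
`T` and each jump has size `< ε`. -/
def IsChain (φ : Flow ℝ M) (T ε : ℝ) (γ : PreChain M) : Prop :=
  (∀ i, T ≤ γ.t i) ∧
  ∀ i : Fin γ.n, dist (φ (γ.t i.castSucc) (γ.x i.castSucc)) (γ.x i.succ) < ε

/-- The starting point of a pseudo-orbit. -/
def first (γ : PreChain M) : M := γ.x 0

/-- The final point of a pseudo-orbit (the endpoint of the last flow segment). -/
def lastPoint (φ : Flow ℝ M) (γ : PreChain M) : M :=
  φ (γ.t (Fin.last γ.n)) (γ.x (Fin.last γ.n))

/-- A periodic `(ε,T)`-pseudo-orbit: the final jump back to the start has size `< ε`. -/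
def IsPeriodic (φ : Flow ℝ M) (T ε : ℝ) (γ : PreChain M) : Prop :=
  γ.IsChain φ T ε ∧ dist (γ.lastPoint φ) γ.first < ε

/-- The total length (duration) of a pseudo-orbit. -/
def len (γ : PreChain M) : ℝ := ∑ i, γ.t i

/-- The pseudo-orbit passes through the point `p`. -/
def Through (γ : PreChain M) (p : M) : Prop := ∃ i, γ.x i = p

end PreChain

/-- Chain reachability `a ⇝ b`: for every `ε > 0` there is an `(ε,T)`-pseudo-orbit
from `a` to `b`. -/
def ChainTo {M : Type*} [MetricSpace M] (φ : Flow ℝ M) (T : ℝ) (a b : M) : Prop :=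
  ∀ ε > 0, ∃ γ : PreChain M, γ.IsChain φ T ε ∧ γ.first = a ∧ γ.lastPoint φ = b

/-- The chain-recurrent set of the flow `φ`. -/
def ChainRec {M : Type*} [MetricSpace M] (φ : Flow ℝ M) (T : ℝ) : Set M :=
  {x | ChainTo φ T x x}

/-- The mutual chain-reachability relation on the chain-recurrent set. -/
def RecRel {M : Type*} [MetricSpace M] (φ : Flow ℝ M) (T : ℝ) :
    ↥(ChainRec φ T) → ↥(ChainRec φ T) → Prop :=
  fun a b => ChainTo φ T (a : M) (b : M) ∧ ChainTo φ T (b : M) (a : M)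

section Aux

open Relation

variable {M : Type*} [MetricSpace M] (φ : Flow ℝ M) (T : ℝ)

/-- One step of a pseudo-orbit: flow for time `t ≥ T`, then jump by `< ε`. -/
def FStep (ε : ℝ) (u v : M) : Prop := ∃ t, T ≤ t ∧ dist (φ t u) v < ε

/-- Existence of an `(ε,T)`-pseudo-orbit from `a` to `b`, with the final flow time
normalized into `[T, 2T]`. -/
def RR (ε : ℝ) (a b : M) : Prop :=
  ∃ z t, Relation.ReflTransGen (FStep φ T ε) a z ∧ T ≤ t ∧ t ≤ 2*T ∧ φ t z = b

variable {φ T}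

lemma fstep_mono {ε ε' : ℝ} (h : ε ≤ ε') {u v : M} (hs : FStep φ T ε u v) :
    FStep φ T ε' u v := by
  obtain ⟨t, ht, hd⟩ := hs
  exact ⟨t, ht, lt_of_lt_of_le hd h⟩

lemma rgen_mono {ε ε' : ℝ} (h : ε ≤ ε') {u v : M}
    (H : ReflTransGen (FStep φ T ε) u v) : ReflTransGen (FStep φ T ε') u v :=
  ReflTransGen.mono (fun _ _ hs => fstep_mono (φ := φ) (T := T) h hs) u v H

lemma rr_mono {ε ε' : ℝ} (h : ε ≤ ε') {a b : M} (H : RR φ T ε a b) : RR φ T ε' a b := by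
  obtain ⟨z, t, P, ht, ht', hz⟩ := H
  exact ⟨z, t, rgen_mono h P, ht, ht', hz⟩

lemma rr_trans {ε : ℝ} {a p q c : M} (h1 : RR φ T ε a p) (h2 : RR φ T ε q c)
    (hd : dist p q < ε) : RR φ T ε a c := by
  obtain ⟨z₁, t₁, P₁, ht₁, _, hz₁⟩ := h1
  obtain ⟨z₂, t₂, P₂, ht₂, ht₂', hz₂⟩ := h2
  exact ⟨z₂, t₂, P₁.trans (ReflTransGen.head ⟨t₁, ht₁, by rwa [hz₁]⟩ P₂), ht₂, ht₂', hz₂⟩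

lemma rr_of_raw (hT : 0 < T) {ε t : ℝ} (hε : 0 < ε) {a z b : M}
    (P : ReflTransGen (FStep φ T ε) a z) (ht : T ≤ t) (hz : φ t z = b) :
    RR φ T ε a b := by
  rcases le_or_gt t (2*T) with h | h
  · exact ⟨z, t, P, ht, h, hz⟩
  · refine ⟨φ (t - T) z, T, P.tail ⟨t - T, by linarith, by simpa using hε⟩,
      le_refl T, by linarith, ?_⟩
    rw [← Flow.map_add, show T + (t - T) = t by ring]
    exact hz

lemma rgen_of_chain {ε : ℝ} {γ : PreChain M} (h : γ.IsChain φ T ε) :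
    ReflTransGen (FStep φ T ε) (γ.x 0) (γ.x (Fin.last γ.n)) := by
  obtain ⟨ht, hj⟩ := h
  have key : ∀ i : Fin (γ.n + 1), ReflTransGen (FStep φ T ε) (γ.x 0) (γ.x i) := by
    intro i
    induction i using Fin.induction with
    | zero => exact ReflTransGen.refl
    | succ j ih => exact ih.tail ⟨γ.t j.castSucc, ht _, hj j⟩
  exact key _

lemma rr_of_chainTo (hT : 0 < T) {a b : M} (h : ChainTo φ T a b) {ε : ℝ} (hε : 0 < ε) :
    RR φ T ε a b := by
  obtain ⟨γ, hγ, hfirst, hlast⟩ := h ε hε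
  have h0 : γ.x 0 = a := hfirst
  exact rr_of_raw hT hε (h0 ▸ rgen_of_chain hγ) (hγ.1 _) (by rw [← hlast]; rfl)

lemma chain_of_rgen {ε : ℝ} {a z : M} (h : ReflTransGen (FStep φ T ε) a z) :
    ∀ t, T ≤ t → ∃ γ : PreChain M, γ.IsChain φ T ε ∧ γ.first = a ∧ γ.lastPoint φ = φ t z := by
  induction h with
  | refl =>
    intro t ht
    exact ⟨⟨0, fun _ => a, fun _ => t⟩, ⟨fun _ => ht, fun i => i.elim0⟩, rfl, rfl⟩
  | @tail b c hrest hstep ih =>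
    intro t ht
    obtain ⟨s, hs, hd⟩ := hstep
    obtain ⟨γ, ⟨hγt, hγj⟩, hfirst, hlast⟩ := ih s hs
    refine ⟨⟨γ.n + 1, Fin.snoc γ.x c, Fin.snoc γ.t t⟩, ⟨?_, ?_⟩, ?_, ?_⟩
    · intro i
      induction i using Fin.lastCases with
      | last => simpa using ht
      | cast j => simpa using hγt j
    · intro i
      induction i using Fin.lastCases with
      | last =>
        simp only [Fin.snoc_castSucc, Fin.succ_last, Fin.snoc_last]
        have : φ (γ.t (Fin.last γ.n)) (γ.x (Fin.last γ.n)) = φ s b := hlast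
        rw [this]
        exact hd
      | cast j =>
        simp only [Fin.succ_castSucc, Fin.snoc_castSucc]
        exact hγj j
    · show (Fin.snoc γ.x c : Fin (γ.n + 2) → M) 0 = a
      have h0 : ((0 : Fin (γ.n + 1)).castSucc) = (0 : Fin (γ.n + 2)) := Fin.castSucc_zero
      rw [← h0, Fin.snoc_castSucc]
      exact hfirst
    · show φ ((Fin.snoc γ.t t : Fin (γ.n + 2) → ℝ) (Fin.last (γ.n + 1)))
        ((Fin.snoc γ.x c : Fin (γ.n + 2) → M) (Fin.last (γ.n + 1))) = φ t c
      rw [Fin.snoc_last, Fin.snoc_last]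

lemma chainTo_iff (hT : 0 < T) {a b : M} :
    ChainTo φ T a b ↔ ∀ ε > 0, RR φ T ε a b := by
  constructor
  · intro h ε hε
    exact rr_of_chainTo hT h hε
  · intro h ε hε
    obtain ⟨z, t, P, ht, _, hz⟩ := h ε hε
    obtain ⟨γ, hγ, h1, h2⟩ := chain_of_rgen P t ht
    exact ⟨γ, hγ, h1, by rw [h2, hz]⟩

lemma chainTo_trans (hT : 0 < T) {a b c : M} (h1 : ChainTo φ T a b) (h2 : ChainTo φ T b c) :
    ChainTo φ T a c := by
  rw [chainTo_iff hT] at *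
  intro ε hε
  exact rr_trans (h1 ε hε) (h2 ε hε) (by simpa using hε)

lemma recRel_equivalence (hT : 0 < T) : Equivalence (RecRel φ T) := by
  constructor
  · intro y
    exact ⟨y.2, y.2⟩
  · intro y z h
    exact ⟨h.2, h.1⟩
  · intro u v w h1 h2
    exact ⟨chainTo_trans hT h1.1 h2.1, chainTo_trans hT h2.2 h1.2⟩

/-- Uniform continuity of the flow (both time directions) for times in `[T, 2T]`. -/
lemma flow_uc [CompactSpace M] (hT : 0 < T) {η : ℝ} (hη : 0 < η) :
    ∃ δ > 0, ∀ s, T ≤ s → s ≤ 2*T → ∀ y y' : M, dist y y' < δ →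
      dist (φ s y) (φ s y') < η ∧ dist (φ (-s) y) (φ (-s) y') < η := by
  haveI : CompactSpace (Set.Icc (-(2*T)) (2*T)) :=
    isCompact_iff_compactSpace.mp isCompact_Icc
  set f : Set.Icc (-(2*T)) (2*T) × M → M := fun p => φ (p.1 : ℝ) p.2 with hf
  have hcont : Continuous f :=
    Flow.continuous φ (continuous_subtype_val.comp continuous_fst) continuous_snd
  have huc : UniformContinuous f := CompactSpace.uniformContinuous_of_continuous hcont
  obtain ⟨δ, hδ, hball⟩ := Metric.uniformContinuous_iff.mp huc η hη
  refine ⟨δ, hδ, fun s hs1 hs2 y y' hd => ?_⟩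
  have hsmem : s ∈ Set.Icc (-(2*T)) (2*T) := ⟨by linarith, by linarith⟩
  have hsmem' : -s ∈ Set.Icc (-(2*T)) (2*T) := ⟨by linarith, by linarith⟩
  constructor
  · have := hball (a := (⟨s, hsmem⟩, y)) (b := (⟨s, hsmem⟩, y'))
      (by simpa [Prod.dist_eq, Subtype.dist_eq, dist_self, max_eq_right dist_nonneg] using hd)
    simpa [hf] using this
  · have := hball (a := (⟨-s, hsmem'⟩, y)) (b := (⟨-s, hsmem'⟩, y'))
      (by simpa [Prod.dist_eq, Subtype.dist_eq, dist_self, max_eq_right dist_nonneg] using hd)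
    simpa [hf] using this

lemma flow_neg_cancel {r : ℝ} (x : M) : φ r (φ (-r) x) = x := by
  rw [← Flow.map_add, show r + -r = 0 by ring, Flow.map_zero_apply]

lemma flow_neg_of_eq {r : ℝ} {z b : M} (h : φ r z = b) : φ (-r) b = z := by
  rw [← h, ← Flow.map_add, show -r + r = 0 by ring, Flow.map_zero_apply]

/-- The chain-recurrent set is closed. -/
lemma isClosed_chainRec [CompactSpace M] (hT : 0 < T) : IsClosed (ChainRec φ T) := by
  apply isClosed_of_closure_subset
  intro x hx
  show ChainTo φ T x x
  rw [chainTo_iff hT]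
  intro ε hε
  have hη : 0 < ε/3 := by linarith
  obtain ⟨δ, hδ, hUC⟩ := flow_uc (φ := φ) hT hη
  obtain ⟨p, hp, hxp⟩ := Metric.mem_closure_iff.mp hx δ hδ
  have hpx : dist p x < δ := by rwa [dist_comm] at hxp
  obtain ⟨z₁, r, P, hr1, hr2, hz⟩ : RR φ T (ε/3) p p := rr_of_chainTo hT hp hη
  have hz₁p : φ (-r) p = z₁ := flow_neg_of_eq hz
  have hfinal : φ r (φ (-r) x) = x := flow_neg_cancel x
  have hdz : dist z₁ (φ (-r) x) < ε/3 := by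
    rw [← hz₁p]
    exact (hUC r hr1 hr2 p x hpx).2
  rcases P.cases_head with heq | ⟨w, hstep, P'⟩
  · -- the pseudo-orbit is a single flow segment: `φ r p = p`
    rw [← heq] at hz
    have step1 : FStep φ T ε x p := by
      refine ⟨r, hr1, ?_⟩
      rw [← hz]
      exact lt_trans (hUC r hr1 hr2 x p hxp).1 (by linarith)
    have step2 : FStep φ T ε p (φ (-r) x) := by
      refine ⟨r, hr1, ?_⟩
      rw [hz]
      have hneg : φ (-r) p = p := by rw [flow_neg_of_eq hz]
      calc dist p (φ (-r) x) = dist (φ (-r) p) (φ (-r) x) := by rw [hneg]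
        _ < ε/3 := (hUC r hr1 hr2 p x hpx).2
        _ < ε := by linarith
    exact ⟨φ (-r) x, r, (ReflTransGen.refl.tail step1).tail step2, hr1, hr2, hfinal⟩
  · obtain ⟨t₀, ht₀, hd₀⟩ := hstep
    obtain ⟨w₁, s, hs1, hs2, hd₁, P₁⟩ :
        ∃ w₁ s, T ≤ s ∧ s ≤ 2*T ∧ dist (φ s p) w₁ < ε/3 ∧
          ReflTransGen (FStep φ T (ε/3)) w₁ z₁ := by
      rcases le_or_gt t₀ (2*T) with hle | hgt
      · exact ⟨w, t₀, ht₀, hle, hd₀, P'⟩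
      · refine ⟨φ T p, T, le_refl T, by linarith, by simpa using hη,
          ReflTransGen.head ⟨t₀ - T, by linarith, ?_⟩ P'⟩
        rw [← Flow.map_add, show t₀ - T + T = t₀ by ring]
        exact hd₀
    have hfwd : dist (φ s x) (φ s p) < ε/3 := (hUC s hs1 hs2 x p hxp).1
    rcases P₁.cases_tail with heq | ⟨u, Q, hlast⟩
    · -- z₁ = w₁
      refine ⟨φ (-r) x, r, ReflTransGen.refl.tail ⟨s, hs1, ?_⟩, hr1, hr2, hfinal⟩
      have h4 := dist_triangle4 (φ s x) (φ s p) w₁ (φ (-r) x)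
      have hdz' : dist w₁ (φ (-r) x) < ε/3 := by rw [← heq]; exact hdz
      linarith
    · obtain ⟨t₁, ht₁, hd₁'⟩ := hlast
      have step1 : FStep φ T ε x w₁ := by
        refine ⟨s, hs1, ?_⟩
        calc dist (φ s x) w₁ ≤ dist (φ s x) (φ s p) + dist (φ s p) w₁ := dist_triangle _ _ _
          _ < ε := by linarith
      have step2 : FStep φ T ε u (φ (-r) x) := by
        refine ⟨t₁, ht₁, ?_⟩
        calc dist (φ t₁ u) (φ (-r) x) ≤ dist (φ t₁ u) z₁ + dist z₁ (φ (-r) x) :=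
            dist_triangle _ _ _
          _ < ε := by linarith
      exact ⟨φ (-r) x, r,
        ((ReflTransGen.refl.tail step1).trans (rgen_mono (by linarith) Q)).tail step2,
        hr1, hr2, hfinal⟩

/-- The set of points reachable from `a` by `ε`-pseudo-orbits is, near any
chain-recurrent point of it, stable under small perturbation of the endpoint. -/
lemma open_aux [CompactSpace M] (hT : 0 < T) {ε : ℝ} (hε : 0 < ε) {a y : M}
    (h1 : RR φ T ε a y) (hy : ChainTo φ T y y) :
    ∃ δ > 0, ∀ y' : M, dist y y' < δ → RR φ T ε a y' := by
  have hη : 0 < ε/2 := by linarith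
  obtain ⟨δ, hδ, hUC⟩ := flow_uc (φ := φ) hT hη
  refine ⟨δ, hδ, fun y' hy' => ?_⟩
  obtain ⟨z₁, r, P, hr1, hr2, hz⟩ : RR φ T (ε/2) y y := rr_of_chainTo hT hy hη
  obtain ⟨z, t, Pa, ht1, ht2, hza⟩ := h1
  have hfinal : φ r (φ (-r) y') = y' := flow_neg_cancel y'
  have hz₁y : φ (-r) y = z₁ := flow_neg_of_eq hz
  have hdz : dist z₁ (φ (-r) y') < ε/2 := by
    rw [← hz₁y]
    exact (hUC r hr1 hr2 y y' hy').2
  rcases P.cases_tail with heq | ⟨u, Q, hstep⟩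
  · -- z₁ = y
    refine ⟨φ (-r) y', r, Pa.tail ⟨t, ht1, ?_⟩, hr1, hr2, hfinal⟩
    rw [hza]
    calc dist y (φ (-r) y') = dist z₁ (φ (-r) y') := by rw [heq]
      _ < ε/2 := hdz
      _ < ε := by linarith
  · obtain ⟨t₁, ht₁, hd₁⟩ := hstep
    refine ⟨φ (-r) y', r,
      ((Pa.tail ⟨t, ht1, by rw [hza]; simpa using hε⟩).trans
        (rgen_mono (by linarith) Q)).tail ⟨t₁, ht₁, ?_⟩, hr1, hr2, hfinal⟩
    calc dist (φ t₁ u) (φ (-r) y') ≤ dist (φ t₁ u) z₁ + dist z₁ (φ (-r) y') :=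
        dist_triangle _ _ _
      _ < ε := by linarith

/-- Separation of non-equivalent recurrence chains by a clopen saturated set. -/
lemma clopen_sep [CompactSpace M] (hT : 0 < T) (a b : ↥(ChainRec φ T))
    (h : ¬ ChainTo φ T (a : M) (b : M)) :
    ∃ U : Set (Quot (RecRel φ T)), IsClopen U ∧
      Quot.mk _ a ∈ U ∧ Quot.mk _ b ∉ U := by
  rw [chainTo_iff hT] at h
  push_neg at h
  obtain ⟨ε₀, hε₀, hnot⟩ := h
  have hε₀2 : (0:ℝ) < ε₀/2 := by linarith
  set V : Set ↥(ChainRec φ T) := {y | RR φ T (ε₀/2) (a : M) (y : M)} with hV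
  have hsat : ∀ y z : ↥(ChainRec φ T), RecRel φ T y z → (y ∈ V ↔ z ∈ V) := by
    intro y z hyz
    constructor
    · intro hyV
      exact rr_trans hyV (rr_of_chainTo hT hyz.1 hε₀2) (by simpa using hε₀2)
    · intro hzV
      exact rr_trans hzV (rr_of_chainTo hT hyz.2 hε₀2) (by simpa using hε₀2)
  have hsatset : Quot.mk (RecRel φ T) ⁻¹' (Quot.mk (RecRel φ T) '' V) = V := by
    ext y
    constructor
    · rintro ⟨v, hvV, hveq⟩
      have hrel : RecRel φ T v y :=
        ((recRel_equivalence hT).eqvGen_iff).mp (Quot.eqvGen_exact hveq)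
      exact (hsat v y hrel).mp hvV
    · intro hyV
      exact ⟨y, hyV, rfl⟩
  have hVclosed : IsClosed V := by
    apply isClosed_of_closure_subset
    intro y hy
    obtain ⟨v, hvV, hdv⟩ := Metric.mem_closure_iff.mp hy (ε₀/2) hε₀2
    refine rr_trans hvV (rr_of_chainTo hT y.2 hε₀2) ?_
    rw [dist_comm]
    exact hdv
  have hVopen : IsOpen V := by
    rw [Metric.isOpen_iff]
    intro y hyV
    obtain ⟨δ, hδ, hδp⟩ := open_aux hT hε₀2 hyV y.2
    refine ⟨δ, hδ, fun y' hy' => ?_⟩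
    refine hδp (y' : M) ?_
    rw [dist_comm]
    exact Metric.mem_ball.mp hy'
  refine ⟨Quot.mk (RecRel φ T) '' V, ⟨?_, ?_⟩, ⟨a, rr_of_chainTo hT a.2 hε₀2, rfl⟩, ?_⟩
  · rw [← isQuotientMap_quot_mk.isClosed_preimage, hsatset]
    exact hVclosed
  · rw [← isQuotientMap_quot_mk.isOpen_preimage, hsatset]
    exact hVopen
  · rintro ⟨v, hvV, hveq⟩
    have hrel : RecRel φ T v b :=
      ((recRel_equivalence hT).eqvGen_iff).mp (Quot.eqvGen_exact hveq)
    have hbV : b ∈ V := (hsat v b hrel).mp hvV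
    exact hnot (rr_mono (by linarith) hbV)

end Aux

/-- Let `M` be a compact metric space and `φ` a continuous flow. The
quotient `Rec*` of the chain-recurrent set by mutual chain-reachability, with the
quotient topology, is compact and totally disconnected. -/
theorem recurrence_chains_compact_totallyDisconnected
    {M : Type*} [MetricSpace M] [CompactSpace M]
    (φ : Flow ℝ M) (T : ℝ) (hT : 0 < T) :
    CompactSpace (Quot (RecRel φ T)) ∧ TotallyDisconnectedSpace (Quot (RecRel φ T)) := by
  haveI : CompactSpace ↥(ChainRec φ T) :=
    isCompact_iff_compactSpace.mp (isClosed_chainRec hT).isCompact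
  constructor
  · constructor
    have hsurj : Function.Surjective (Quot.mk (RecRel φ T)) := fun q => Quot.exists_rep q
    rw [← Set.range_eq_univ.mpr hsurj]
    exact isCompact_range continuous_quot_mk
  · haveI : TotallySeparatedSpace (Quot (RecRel φ T)) := by
      rw [totallySeparatedSpace_iff_exists_isClopen]
      intro qa qb hne
      obtain ⟨a, rfl⟩ := Quot.exists_rep qa
      obtain ⟨b, rfl⟩ := Quot.exists_rep qb
      have hnab : ¬ RecRel φ T a b := fun h => hne (Quot.sound h)
      rcases not_and_or.mp hnab with h | h
      · obtain ⟨U, hU, haU, hbU⟩ := clopen_sep hT a b h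
        exact ⟨U, hU, haU, hbU⟩
      · obtain ⟨U, hU, hbU, haU⟩ := clopen_sep hT b a h
        exact ⟨Uᶜ, hU.compl, haU, by simpa using hbU⟩
    infer_instance
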